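/- arXiv:alg-geom/9307001 — 2 statements merged into one kernel-verified Lean document; each statement's English description precedes it below -/
import Mathlib

section
/- Let N be an odd natural number and let Q ⊆ {1, ..., N} with |Q| > N/2. Let r_1, ..., r_N be natural numbers with ∑_j r_j + |Q| ≤ N - 2. Then the sum over all sign vectors n = (n_1, ..., n_N) ∈ {−1, +1}^N with ∑_j n_j > 0 of the quantity (∏_{j=1}^N n_j^{r_j + 1}) · ∏_{k ∈ Q} (n_k + 1) minus the analogous sum over sign vectors with ∑_j n_j < 0 equals zero. -/
open Finset

theorem sign_vector_sum_vanishes (N : ℕ) (hN : Odd N)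
    (Q : Finset (Fin N)) (hQ : N < 2 * Q.card)
    (r : Fin N → ℕ) (hr : (∑ j, r j) + Q.card ≤ N - 2) :
    (∑ n ∈ Finset.univ.filter
        (fun n : Fin N → Bool => 0 < ∑ j, (if n j then (1 : ℤ) else -1)),
        (∏ j, (if n j then (1 : ℤ) else -1) ^ (r j + 1)) *
          ∏ k ∈ Q, ((if n k then (1 : ℤ) else -1) + 1))
    - (∑ n ∈ Finset.univ.filter
        (fun n : Fin N → Bool => (∑ j, (if n j then (1 : ℤ) else -1)) < 0),
        (∏ j, (if n j then (1 : ℤ) else -1) ^ (r j + 1)) *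
          ∏ k ∈ Q, ((if n k then (1 : ℤ) else -1) + 1)) = 0 := by
  have hQN : Q.card ≤ N := by
    simpa using Finset.card_le_univ Q
  -- positivity of the signed sum when all of Q is true
  have hpos : ∀ n : Fin N → Bool, (∀ k ∈ Q, n k = true) →
      0 < ∑ j, (if n j then (1 : ℤ) else -1) := by
    intro n hn
    have hsplit : ∑ j ∈ Q, (if n j then (1 : ℤ) else -1)
        + ∑ j ∈ Qᶜ, (if n j then (1 : ℤ) else -1)
        = ∑ j, (if n j then (1 : ℤ) else -1) := Finset.sum_add_sum_compl Q _
    have h1 : ∑ j ∈ Q, (if n j then (1 : ℤ) else -1) = Q.card := by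
      rw [Finset.sum_congr rfl (fun j hj => by rw [hn j hj, if_pos rfl])]
      simp
    have h2 : -(Qᶜ.card : ℤ) ≤ ∑ j ∈ Qᶜ, (if n j then (1 : ℤ) else -1) := by
      have := Finset.sum_le_sum (f := fun j => (-1 : ℤ))
        (g := fun j => (if n j then (1 : ℤ) else -1)) (s := Qᶜ)
        (fun j _ => by by_cases h : n j <;> simp [h])
      simpa using this
    have hcc : (Qᶜ.card : ℤ) = (N : ℤ) - Q.card := by
      rw [Finset.card_compl]
      simp [Nat.cast_sub hQN]
    have : (0 : ℤ) < 2 * Q.card - N := by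
      have := hQ
      omega
    rw [← hsplit, h1]
    rw [hcc] at h2
    linarith
  -- terms vanish when some k in Q is false
  have hT0 : ∀ n : Fin N → Bool, (∃ k ∈ Q, n k = false) →
      (∏ j, (if n j then (1 : ℤ) else -1) ^ (r j + 1)) *
          ∏ k ∈ Q, ((if n k then (1 : ℤ) else -1) + 1) = 0 := by
    intro n ⟨k, hk, hkf⟩
    apply mul_eq_zero_of_right
    apply Finset.prod_eq_zero hk
    rw [hkf]
    norm_num
  -- second sum is zero
  have hsum2 : (∑ n ∈ Finset.univ.filter
        (fun n : Fin N → Bool => (∑ j, (if n j then (1 : ℤ) else -1)) < 0),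
        (∏ j, (if n j then (1 : ℤ) else -1) ^ (r j + 1)) *
          ∏ k ∈ Q, ((if n k then (1 : ℤ) else -1) + 1)) = 0 := by
    apply Finset.sum_eq_zero
    intro n hn
    rw [Finset.mem_filter] at hn
    apply hT0
    by_contra hc
    push_neg at hc
    have : ∀ k ∈ Q, n k = true := fun k hk => by
      have := hc k hk; revert this; cases n k <;> simp
    exact absurd (hpos n this) (not_lt.mpr (le_of_lt hn.2))
  rw [hsum2, sub_zero]
  -- first sum equals the full sum
  rw [Finset.sum_filter_of_ne (fun n _ hne => by
    by_contra hc
    apply hne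
    apply hT0
    by_contra hc2
    push_neg at hc2
    exact hc (hpos n (fun k hk => by
      have := hc2 k hk; revert this; cases n k <;> simp)))]
  -- rewrite integrand as a single product
  have hre : ∀ n : Fin N → Bool,
      (∏ j, (if n j then (1 : ℤ) else -1) ^ (r j + 1)) *
          ∏ k ∈ Q, ((if n k then (1 : ℤ) else -1) + 1)
      = ∏ j, ((if n j then (1 : ℤ) else -1) ^ (r j + 1) *
          (if j ∈ Q then ((if n j then (1 : ℤ) else -1) + 1) else 1)) := by
    intro n
    rw [Finset.prod_mul_distrib]
    congr 1
    rw [Finset.prod_ite_mem, Finset.univ_inter]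
  rw [Finset.sum_congr rfl (fun n _ => hre n)]
  -- factorize the sum over functions
  rw [← Fintype.piFinset_univ,
    ← Finset.prod_univ_sum (t := fun _ : Fin N => (Finset.univ : Finset Bool))
      (f := fun j b => (if b then (1 : ℤ) else -1) ^ (r j + 1) *
        if j ∈ Q then ((if b then (1 : ℤ) else -1) + 1) else 1)]
  -- find j0 not in Q with r j0 even
  obtain ⟨j0, hj0Q, hj0e⟩ : ∃ j, j ∉ Q ∧ Even (r j) := by
    by_contra h
    push_neg at h
    have h1 : ∀ j ∈ Qᶜ, 1 ≤ r j := by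
      intro j hj
      have := h j (Finset.mem_compl.mp hj)
      rcases Nat.even_or_odd (r j) with he | ho
      · exact absurd he this
      · exact ho.pos
    have h2 : Qᶜ.card ≤ ∑ j ∈ Qᶜ, r j := by
      calc Qᶜ.card = ∑ j ∈ Qᶜ, 1 := by simp
        _ ≤ ∑ j ∈ Qᶜ, r j := Finset.sum_le_sum h1
    have h3 : ∑ j ∈ Qᶜ, r j ≤ ∑ j, r j :=
      Finset.sum_le_sum_of_subset (Finset.subset_univ _)
    have h4 : Qᶜ.card = N - Q.card := by rw [Finset.card_compl]; simp
    have hN1 : 1 ≤ N := hN.pos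
    clear h hpos hT0 hsum2 hre h1
    omega
  apply Finset.prod_eq_zero (Finset.mem_univ j0)
  rw [Fintype.sum_bool]
  have : Odd (r j0 + 1) := Even.add_one hj0e
  simp [hj0Q, this.neg_one_pow]
end

section
/- Let λ¹, λ² > 0 and ξ₁, ξ₂ > 0. Then the iterated contour integral (1/(2πi)²) ∫_{ψ₂ ∈ ℝ − iξ₂} ∫_{ψ₁ ∈ ℝ − iξ₁} e^{i(λ¹ψ₁ + λ²ψ₂)} / (ψ₁ ψ₂ (ψ₁ + ψ₂)) dψ₁ dψ₂ equals i·λ² if λ¹ > λ² and equals i·λ¹ if λ² > λ¹. -/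
set_option maxHeartbeats 1000000

open MeasureTheory Set Filter Complex Topology
open scoped Real FourierTransform

lemma sub_ofReal_ne (x : ℝ) (a : ℂ) (ha : a.im ≠ 0) : (x : ℂ) - a ≠ 0 := by
  intro h0
  apply ha
  have := congrArg Complex.im h0
  simpa using this

lemma norm_sub_ofReal_sq (x : ℝ) (a : ℂ) : ‖(x : ℂ) - a‖ ^ 2 = (x - a.re) ^ 2 + a.im ^ 2 := by
  rw [Complex.sq_norm]
  simp [Complex.normSq_apply]
  ring

lemma integrable_inv_shift (a : ℂ) (ha : a.im ≠ 0) :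
    Integrable (fun x : ℝ => ((x - a.re) ^ 2 + a.im ^ 2)⁻¹) := by
  have h1 : Integrable (fun x : ℝ => (1 + (x * a.im⁻¹) ^ 2)⁻¹) :=
    (integrable_comp_mul_right_iff (fun x : ℝ => (1 + x ^ 2)⁻¹) (inv_ne_zero ha)).2
      integrable_inv_one_add_sq
  have h2 : Integrable (fun x : ℝ => (a.im⁻¹) ^ 2 * (1 + ((x) * a.im⁻¹) ^ 2)⁻¹ ) := h1.const_mul _
  have h3 : (fun x : ℝ => (x ^ 2 + a.im ^ 2)⁻¹)
      = fun x : ℝ => (a.im⁻¹) ^ 2 * (1 + (x * a.im⁻¹) ^ 2)⁻¹ := by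
    funext x
    field_simp
    ring
  have h4 : Integrable (fun x : ℝ => (x ^ 2 + a.im ^ 2)⁻¹) := h3 ▸ h2
  simpa using h4.comp_sub_right a.re

lemma norm_cexp_I_mul (l x : ℝ) : ‖Complex.exp (Complex.I * (l * x))‖ = 1 := by
  rw [Complex.norm_exp]
  simp [Complex.mul_re]

lemma cont_exp_I_mul (l : ℝ) : Continuous fun x : ℝ => Complex.exp (Complex.I * (l * x)) := by
  fun_prop

lemma integrable_one_div_sq (a : ℂ) (ha : a.im ≠ 0) (l : ℝ) :
    Integrable (fun x : ℝ => Complex.exp (Complex.I * (l * x)) / ((x : ℂ) - a) ^ 2) := by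
  apply Integrable.mono' (integrable_inv_shift a ha)
  · apply Continuous.aestronglyMeasurable
    exact (cont_exp_I_mul l).div (by fun_prop) fun x => pow_ne_zero _ (sub_ofReal_ne x a ha)
  · filter_upwards with x
    rw [norm_div, norm_cexp_I_mul, norm_pow, norm_sub_ofReal_sq]
    rw [one_div]

lemma integrable_one_div_mul (a b : ℂ) (ha : a.im ≠ 0) (hb : b.im ≠ 0) (l : ℝ) :
    Integrable (fun x : ℝ =>
      Complex.exp (Complex.I * (l * x)) / (((x : ℂ) - a) * ((x : ℂ) - b))) := by
  apply Integrable.mono'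
    (((integrable_inv_shift a ha).add (integrable_inv_shift b hb)).const_mul (2⁻¹ : ℝ))
  · apply Continuous.aestronglyMeasurable
    exact (cont_exp_I_mul l).div (by fun_prop) fun x =>
      mul_ne_zero (sub_ofReal_ne x a ha) (sub_ofReal_ne x b hb)
  · filter_upwards with x
    rw [norm_div, norm_cexp_I_mul, norm_mul, one_div]
    have hA : 0 < ‖(x : ℂ) - a‖ := norm_pos_iff.2 (sub_ofReal_ne x a ha)
    have hB : 0 < ‖(x : ℂ) - b‖ := norm_pos_iff.2 (sub_ofReal_ne x b hb)
    have key : (‖(x : ℂ) - a‖ * ‖(x : ℂ) - b‖)⁻¹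
        ≤ 2⁻¹ * ((‖(x : ℂ) - a‖ ^ 2)⁻¹ + (‖(x : ℂ) - b‖ ^ 2)⁻¹) := by
      set u := ‖(x : ℂ) - a‖ with hu
      set v := ‖(x : ℂ) - b‖ with hv
      have e1 : (u * v)⁻¹ = 2 * (u * v) / (2 * (u ^ 2 * v ^ 2)) := by
        field_simp
      have e2 : 2⁻¹ * ((u ^ 2)⁻¹ + (v ^ 2)⁻¹) = (u ^ 2 + v ^ 2) / (2 * (u ^ 2 * v ^ 2)) := by
        field_simp
        ring
      rw [e1, e2]
      gcongr ?_ / _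
      nlinarith [sq_nonneg (u - v)]
    calc (‖(x : ℂ) - a‖ * ‖(x : ℂ) - b‖)⁻¹ ≤ _ := key
      _ = 2⁻¹ * (((x - a.re) ^ 2 + a.im ^ 2)⁻¹ + ((x - b.re) ^ 2 + b.im ^ 2)⁻¹) := by
          rw [norm_sub_ofReal_sq, norm_sub_ofReal_sq]

lemma norm_cexp_mul_ofReal (c : ℂ) (t : ℝ) : ‖Complex.exp (c * t)‖ = Real.exp (c.re * t) := by
  rw [Complex.norm_exp]
  congr 1
  simp [Complex.mul_re]

lemma hasDerivAt_cexp_mul (c : ℂ) (t : ℝ) :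
    HasDerivAt (fun t : ℝ => Complex.exp (c * t)) (c * Complex.exp (c * t)) t := by
  have h1 : HasDerivAt (fun t : ℝ => c * (t : ℂ)) c t := by
    simpa using (Complex.ofRealCLM.hasDerivAt (x := t)).const_mul c
  simpa [mul_comm] using h1.cexp

lemma integrableOn_cexp_Ioi (c : ℂ) (hc : c.re < 0) :
    IntegrableOn (fun t : ℝ => Complex.exp (c * t)) (Ioi 0) := by
  apply Integrable.mono' (g := fun t : ℝ => Real.exp (c.re * t))
  · have := exp_neg_integrableOn_Ioi (0 : ℝ) (b := -c.re) (by linarith)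
    exact (by simpa using this : IntegrableOn (fun t : ℝ => Real.exp (c.re * t)) (Ioi 0))
  · exact (Complex.continuous_exp.comp (by fun_prop)).aestronglyMeasurable
  · filter_upwards with t
    rw [norm_cexp_mul_ofReal]

lemma integrableOn_mul_cexp_Ioi (c : ℂ) (hc : c.re < 0) :
    IntegrableOn (fun t : ℝ => (t : ℂ) * Complex.exp (c * t)) (Ioi 0) := by
  apply Integrable.mono' (g := fun t : ℝ => t * Real.exp (c.re * t))
  · have h := integrableOn_rpow_mul_exp_neg_mul_rpow (s := 1) (p := 1) (b := -c.re)
      (by norm_num) (by norm_num) (by linarith)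
    apply h.congr_fun ?_ measurableSet_Ioi
    intro t _
    simp only [Real.rpow_one]
    ring_nf
  · exact ((Complex.continuous_ofReal.mul (Complex.continuous_exp.comp
      (by fun_prop)))).aestronglyMeasurable
  · filter_upwards [ae_restrict_mem measurableSet_Ioi] with t ht
    rw [norm_mul, norm_cexp_mul_ofReal]
    simp only [Complex.norm_real, Real.norm_eq_abs]
    rw [abs_of_pos ht]

lemma tendsto_cexp_mul_atTop (c : ℂ) (hc : c.re < 0) :
    Tendsto (fun t : ℝ => Complex.exp (c * t)) atTop (𝓝 0) := by
  rw [tendsto_zero_iff_norm_tendsto_zero]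
  simp only [norm_cexp_mul_ofReal]
  have h1 : Tendsto (fun t : ℝ => c.re * t) atTop atBot := by
    apply Tendsto.const_mul_atTop_of_neg hc tendsto_id
  exact Real.tendsto_exp_atBot.comp h1

lemma integral_cexp_Ioi (c : ℂ) (hc : c.re < 0) :
    ∫ t in Ioi (0:ℝ), Complex.exp (c * t) = -c⁻¹ := by
  have hc0 : c ≠ 0 := fun h => by simp [h] at hc
  have htd : Tendsto (fun t : ℝ => Complex.exp (c * t) / c) atTop (𝓝 0) := by
    simpa using (tendsto_cexp_mul_atTop c hc).div_const c
  have hder : ∀ t ∈ Ici (0:ℝ), HasDerivAt (fun t : ℝ => Complex.exp (c * t) / c)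
      (Complex.exp (c * t)) t := fun t _ => by
    simpa [mul_div_assoc, mul_div_cancel_left₀ _ hc0, mul_comm]
      using (hasDerivAt_cexp_mul c t).div_const c
  have := integral_Ioi_of_hasDerivAt_of_tendsto' hder (integrableOn_cexp_Ioi c hc) htd
  rw [this]
  simp [div_eq_mul_inv]

lemma integral_mul_cexp_Ioi (c : ℂ) (hc : c.re < 0) :
    ∫ t in Ioi (0:ℝ), (t : ℂ) * Complex.exp (c * t) = (c ^ 2)⁻¹ := by
  have hc0 : c ≠ 0 := fun h => by simp [h] at hc
  set F : ℝ → ℂ := fun t => ((t : ℂ) * c⁻¹ - (c ^ 2)⁻¹) * Complex.exp (c * t) with hF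
  have hder : ∀ t ∈ Ici (0:ℝ), HasDerivAt F ((t : ℂ) * Complex.exp (c * t)) t := by
    intro t _
    have h1 : HasDerivAt (fun t : ℝ => (t : ℂ) * c⁻¹ - (c ^ 2)⁻¹) c⁻¹ t := by
      simpa using ((Complex.ofRealCLM.hasDerivAt (x := t)).mul_const c⁻¹).sub_const ((c ^ 2)⁻¹)
    have h2 := h1.mul (hasDerivAt_cexp_mul c t)
    convert h2 using 1
    · rfl
    · rfl
    field_simp
    ring
  have htd : Tendsto F atTop (𝓝 0) := by
    apply squeeze_zero_norm' (a := fun t : ℝ =>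
      ‖c‖⁻¹ * (t * Real.exp (-(-c.re) * t)) + ‖(c ^ 2)⁻¹‖ * Real.exp (-(-c.re) * t))
    · filter_upwards [eventually_ge_atTop (0:ℝ)] with t ht
      rw [hF]
      simp only [norm_mul]
      rw [norm_cexp_mul_ofReal]
      have h3 : ‖(t : ℂ) * c⁻¹ - (c ^ 2)⁻¹‖ ≤ ‖c‖⁻¹ * t + ‖(c ^ 2)⁻¹‖ := by
        refine (norm_sub_le _ _).trans ?_
        gcongr
        rw [norm_mul, Complex.norm_real, Real.norm_eq_abs, _root_.abs_of_nonneg ht, norm_inv]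
        exact le_of_eq (by ring)

      calc ‖(t : ℂ) * c⁻¹ - (c ^ 2)⁻¹‖ * Real.exp (c.re * t)
          ≤ (‖c‖⁻¹ * t + ‖(c ^ 2)⁻¹‖) * Real.exp (c.re * t) := by
            gcongr
        _ = ‖c‖⁻¹ * (t * Real.exp (-(-c.re) * t)) + ‖(c ^ 2)⁻¹‖ * Real.exp (-(-c.re) * t) := by
            rw [neg_neg]
            ring
    · have h4 : Tendsto (fun t : ℝ => t * Real.exp (-(-c.re) * t)) atTop (𝓝 0) := by
        have := tendsto_rpow_mul_exp_neg_mul_atTop_nhds_zero 1 (-c.re) (by linarith)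
        apply this.congr'
        filter_upwards [eventually_ge_atTop (0:ℝ)] with t ht
        rw [Real.rpow_one]
      have h5 : Tendsto (fun t : ℝ => Real.exp (-(-c.re) * t)) atTop (𝓝 0) := by
        rw [show (fun t : ℝ => Real.exp (-(-c.re) * t)) = Real.exp ∘ (fun t : ℝ => c.re * t) by
          funext t; simp [neg_neg]]
        exact Real.tendsto_exp_atBot.comp (Tendsto.const_mul_atTop_of_neg hc tendsto_id)
      have := (h4.const_mul (‖c‖⁻¹)).add (h5.const_mul (‖(c ^ 2)⁻¹‖))
      rw [show ‖(c ^ 2)⁻¹‖ = (‖c ^ 2‖)⁻¹ by simp] at this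
      simpa [norm_pow] using this
  have := integral_Ioi_of_hasDerivAt_of_tendsto' hder (integrableOn_mul_cexp_Ioi c hc) htd
  rw [this, hF]
  simp [Complex.exp_zero]

lemma re_two_pi_I_mul (a : ℂ) : (2 * ↑π * Complex.I * a).re = -2 * π * a.im := by
  simp [Complex.mul_re, Complex.mul_im]

lemma fourier_ind (g : ℝ → ℂ) (x : ℝ) :
    𝓕 (Set.indicator (Ici (0:ℝ)) g) x
      = ∫ t in Ioi (0:ℝ), Complex.exp (↑(-2 * π * t * x) * Complex.I) * g t := by
  rw [Real.fourier_real_eq_integral_exp_smul]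
  have h : (fun v : ℝ => Complex.exp (↑(-2 * π * v * x) * Complex.I)
        • (Set.indicator (Ici (0:ℝ)) g v))
      = Set.indicator (Ici (0:ℝ))
        (fun v : ℝ => Complex.exp (↑(-2 * π * v * x) * Complex.I) * g v) := by
    funext v
    by_cases hv : v ∈ Ici (0:ℝ)
    · rw [Set.indicator_of_mem hv, Set.indicator_of_mem hv, smul_eq_mul]
    · rw [Set.indicator_of_notMem hv, Set.indicator_of_notMem hv, smul_zero]
  rw [h, integral_indicator measurableSet_Ici, integral_Ici_eq_integral_Ioi]

noncomputable def br1 (a b : ℂ) : ℝ → ℂ := fun t =>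
  (2 * ↑π * Complex.I / (a - b)) *
    (Complex.exp ((2 * ↑π * Complex.I * a) * t) - Complex.exp ((2 * ↑π * Complex.I * b) * t))

noncomputable def phi1 (a b : ℂ) : ℝ → ℂ := Set.indicator (Ici (0:ℝ)) (br1 a b)

lemma key1 (a b : ℂ) (ha : 0 < a.im) (hb : 0 < b.im) (hab : a ≠ b) (l : ℝ) (hl : l ≠ 0) :
    ∫ x : ℝ, Complex.exp (Complex.I * (l * x)) / (((x : ℂ) - a) * ((x : ℂ) - b))
      = if 0 < l then
          2 * π * Complex.I *
            (Complex.exp (Complex.I * (l * a)) - Complex.exp (Complex.I * (l * b))) / (a - b)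
        else 0 := by
  have hπ : (π : ℂ) ≠ 0 := Complex.ofReal_ne_zero.2 Real.pi_ne_zero
  have hπR : (π : ℝ) ≠ 0 := Real.pi_ne_zero
  have hab' : a - b ≠ 0 := sub_ne_zero.2 hab
  have hca : (2 * ↑π * Complex.I * a).re < 0 := by
    rw [re_two_pi_I_mul]
    nlinarith [Real.pi_pos, ha]
  have hcb : (2 * ↑π * Complex.I * b).re < 0 := by
    rw [re_two_pi_I_mul]
    nlinarith [Real.pi_pos, hb]
  have hφint : Integrable (phi1 a b) := by
    rw [phi1, integrable_indicator_iff measurableSet_Ici, integrableOn_Ici_iff_integrableOn_Ioi]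
    exact ((integrableOn_cexp_Ioi _ hca).sub (integrableOn_cexp_Ioi _ hcb)).const_mul _
  have h𝓕fun : 𝓕 (phi1 a b) = fun x : ℝ => 1 / (((x : ℂ) - a) * ((x : ℂ) - b)) := by
    funext x
    have hcax : (2 * ↑π * Complex.I * (a - x)).re < 0 := by
      rw [re_two_pi_I_mul]
      have h : (a - (x:ℂ)).im = a.im := by simp
      rw [h]
      nlinarith [Real.pi_pos, ha]
    have hcbx : (2 * ↑π * Complex.I * (b - x)).re < 0 := by
      rw [re_two_pi_I_mul]
      have h : (b - (x:ℂ)).im = b.im := by simp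
      rw [h]
      nlinarith [Real.pi_pos, hb]
    rw [phi1, fourier_ind]
    have e : (fun t : ℝ => Complex.exp (↑(-2 * π * t * x) * Complex.I) * br1 a b t)
        = fun t : ℝ => (2 * ↑π * Complex.I / (a - b)) *
            (Complex.exp ((2 * ↑π * Complex.I * (a - x)) * t)
              - Complex.exp ((2 * ↑π * Complex.I * (b - x)) * t)) := by
      funext t
      rw [br1]
      have h1 : (2 * ↑π * Complex.I * (a - x)) * t
          = ↑(-2 * π * t * x) * Complex.I + (2 * ↑π * Complex.I * a) * t := by
        push_cast
        ring
      have h2 : (2 * ↑π * Complex.I * (b - x)) * t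
          = ↑(-2 * π * t * x) * Complex.I + (2 * ↑π * Complex.I * b) * t := by
        push_cast
        ring
      rw [h1, h2, Complex.exp_add, Complex.exp_add]
      ring
    rw [e, integral_const_mul,
      integral_sub (integrableOn_cexp_Ioi _ hcax) (integrableOn_cexp_Ioi _ hcbx),
      integral_cexp_Ioi _ hcax, integral_cexp_Ioi _ hcbx]
    have hxa : (x : ℂ) - a ≠ 0 := sub_ofReal_ne x a ha.ne'
    have hxb : (x : ℂ) - b ≠ 0 := sub_ofReal_ne x b hb.ne'
    have hax : a - (x : ℂ) ≠ 0 := fun h => hxa (by linear_combination -h)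
    have hbx : b - (x : ℂ) ≠ 0 := fun h => hxb (by linear_combination -h)
    rw [show (2 * ↑π * Complex.I * (a - ↑x))⁻¹
        = (2 * ↑π * Complex.I)⁻¹ * (a - ↑x)⁻¹ from mul_inv _ _,
      show (2 * ↑π * Complex.I * (b - ↑x))⁻¹
        = (2 * ↑π * Complex.I)⁻¹ * (b - ↑x)⁻¹ from mul_inv _ _]
    have h2πI : (2 * ↑π * Complex.I) ≠ 0 :=
      mul_ne_zero (mul_ne_zero two_ne_zero hπ) Complex.I_ne_zero
    have h2 : (2 * ↑π * Complex.I)⁻¹ * (2 * ↑π * Complex.I) = 1 := inv_mul_cancel₀ h2πI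
    calc 2 * ↑π * Complex.I / (a - b) *
          (-((2 * ↑π * Complex.I)⁻¹ * (a - ↑x)⁻¹) - -((2 * ↑π * Complex.I)⁻¹ * (b - ↑x)⁻¹))
        = ((2 * ↑π * Complex.I)⁻¹ * (2 * ↑π * Complex.I)) *
            ((a - b)⁻¹ * (-(a - ↑x)⁻¹ + (b - ↑x)⁻¹)) := by ring
      _ = (a - b)⁻¹ * (-(a - ↑x)⁻¹ + (b - ↑x)⁻¹) := by rw [h2, one_mul]
      _ = 1 / ((↑x - a) * (↑x - b)) := by
          field_simp
          ring
  have h𝓕int : Integrable (𝓕 (phi1 a b)) := by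
    rw [h𝓕fun]
    simpa using integrable_one_div_mul a b ha.ne' hb.ne' 0
  have hcont : ContinuousAt (phi1 a b) (l / (2 * π)) := by
    rcases lt_or_gt_of_ne hl with hneg | hpos
    · have hvneg : l / (2 * π) < 0 := div_neg_of_neg_of_pos hneg (by positivity)
      apply ContinuousAt.congr (f := fun _ : ℝ => (0 : ℂ)) continuousAt_const
      filter_upwards [Iio_mem_nhds hvneg] with t ht
      rw [phi1, Set.indicator_of_notMem (by simpa using not_le.2 ht)]
    · have hvpos : 0 < l / (2 * π) := div_pos hpos (by positivity)
      apply ContinuousAt.congr (f := br1 a b)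
      · exact Continuous.continuousAt (by unfold br1; fun_prop)
      · filter_upwards [Ioi_mem_nhds hvpos] with t ht
        rw [phi1, Set.indicator_of_mem (mem_Ici.2 ht.le)]
  have hinv := hφint.fourierInv_fourier_eq h𝓕int hcont
  rw [h𝓕fun, Real.fourierInv_eq'] at hinv
  simp only [RCLike.inner_apply, conj_trivial, smul_eq_mul] at hinv
  have hLeq : (∫ x : ℝ, Complex.exp (Complex.I * (l * x)) / (((x : ℂ) - a) * ((x : ℂ) - b)))
      = phi1 a b (l / (2 * π)) := by
    rw [← hinv]
    congr 1
    funext x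
    rw [show (2 * π * (l / (2 * π) * x)) = l * x by field_simp,
      show (↑(l * x) * Complex.I : ℂ) = Complex.I * (↑l * ↑x) by push_cast; ring,
      mul_one_div]
  rw [hLeq]
  rcases lt_or_gt_of_ne hl with hneg | hpos
  · rw [if_neg (not_lt.2 hneg.le)]
    have hvneg : l / (2 * π) < 0 := div_neg_of_neg_of_pos hneg (by positivity)
    rw [phi1, Set.indicator_of_notMem (by simpa using not_le.2 hvneg)]
  · rw [if_pos hpos]
    have hvpos : 0 < l / (2 * π) := div_pos hpos (by positivity)
    rw [phi1, Set.indicator_of_mem (mem_Ici.2 hvpos.le), br1]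
    have ea : (2 * ↑π * Complex.I * a) * ((l / (2 * π) : ℝ) : ℂ) = Complex.I * (l * a) := by
      push_cast
      field_simp
    have eb : (2 * ↑π * Complex.I * b) * ((l / (2 * π) : ℝ) : ℂ) = Complex.I * (l * b) := by
      push_cast
      field_simp
    rw [ea, eb]
    ring

noncomputable def br2 (a : ℂ) : ℝ → ℂ := fun t =>
  (-4 * (π : ℂ) ^ 2 * t) * Complex.exp ((2 * ↑π * Complex.I * a) * t)

noncomputable def phi2 (a : ℂ) : ℝ → ℂ := Set.indicator (Ici (0:ℝ)) (br2 a)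

lemma key2 (a : ℂ) (ha : 0 < a.im) (l : ℝ) (hl : l ≠ 0) :
    ∫ x : ℝ, Complex.exp (Complex.I * (l * x)) / ((x : ℂ) - a) ^ 2
      = if 0 < l then 2 * π * Complex.I * (Complex.I * l) * Complex.exp (Complex.I * (l * a))
        else 0 := by
  have hπ : (π : ℂ) ≠ 0 := Complex.ofReal_ne_zero.2 Real.pi_ne_zero
  have hπR : (π : ℝ) ≠ 0 := Real.pi_ne_zero
  have hca : (2 * ↑π * Complex.I * a).re < 0 := by
    rw [re_two_pi_I_mul]
    nlinarith [Real.pi_pos, ha]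
  have hbr2 : br2 a = fun t : ℝ =>
      (-4 * (π : ℂ) ^ 2) * ((t : ℂ) * Complex.exp ((2 * ↑π * Complex.I * a) * t)) := by
    funext t
    unfold br2
    ring
  have hφint : Integrable (phi2 a) := by
    rw [phi2, integrable_indicator_iff measurableSet_Ici, integrableOn_Ici_iff_integrableOn_Ioi,
      hbr2]
    exact (integrableOn_mul_cexp_Ioi _ hca).const_mul _
  have h𝓕fun : 𝓕 (phi2 a) = fun x : ℝ => 1 / ((x : ℂ) - a) ^ 2 := by
    funext x
    have hcax : (2 * ↑π * Complex.I * (a - x)).re < 0 := by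
      rw [re_two_pi_I_mul]
      have h : (a - (x:ℂ)).im = a.im := by simp
      rw [h]
      nlinarith [Real.pi_pos, ha]
    rw [phi2, fourier_ind]
    have e : (fun t : ℝ => Complex.exp (↑(-2 * π * t * x) * Complex.I) * br2 a t)
        = fun t : ℝ => (-4 * (π : ℂ) ^ 2) *
            ((t : ℂ) * Complex.exp ((2 * ↑π * Complex.I * (a - x)) * t)) := by
      funext t
      rw [br2]
      have h1 : (2 * ↑π * Complex.I * (a - x)) * t
          = ↑(-2 * π * t * x) * Complex.I + (2 * ↑π * Complex.I * a) * t := by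
        push_cast
        ring
      rw [h1, Complex.exp_add]
      ring
    rw [e, integral_const_mul, integral_mul_cexp_Ioi _ hcax]
    have hxa : (x : ℂ) - a ≠ 0 := sub_ofReal_ne x a ha.ne'
    have hax : a - (x : ℂ) ≠ 0 := fun h => hxa (by linear_combination -h)
    have hsq : (2 * ↑π * Complex.I * (a - ↑x)) ^ 2 = -(4 * ↑π ^ 2 * (a - ↑x) ^ 2) := by
      have := Complex.I_sq
      linear_combination (4 * (π:ℂ)^2 * (a - ↑x)^2) * this
    rw [hsq]
    rw [show (-(4 * (π:ℂ) ^ 2 * (a - ↑x) ^ 2))⁻¹ = -((4 * (π:ℂ) ^ 2 * (a - ↑x) ^ 2))⁻¹ from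
      inv_neg]
    field_simp
    ring
  have h𝓕int : Integrable (𝓕 (phi2 a)) := by
    rw [h𝓕fun]
    simpa using integrable_one_div_sq a ha.ne' 0
  have hcont : ContinuousAt (phi2 a) (l / (2 * π)) := by
    rcases lt_or_gt_of_ne hl with hneg | hpos
    · have hvneg : l / (2 * π) < 0 := div_neg_of_neg_of_pos hneg (by positivity)
      apply ContinuousAt.congr (f := fun _ : ℝ => (0 : ℂ)) continuousAt_const
      filter_upwards [Iio_mem_nhds hvneg] with t ht
      rw [phi2, Set.indicator_of_notMem (by simpa using not_le.2 ht)]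
    · have hvpos : 0 < l / (2 * π) := div_pos hpos (by positivity)
      apply ContinuousAt.congr (f := br2 a)
      · exact Continuous.continuousAt (by unfold br2; fun_prop)
      · filter_upwards [Ioi_mem_nhds hvpos] with t ht
        rw [phi2, Set.indicator_of_mem (mem_Ici.2 ht.le)]
  have hinv := hφint.fourierInv_fourier_eq h𝓕int hcont
  rw [h𝓕fun, Real.fourierInv_eq'] at hinv
  simp only [RCLike.inner_apply, conj_trivial, smul_eq_mul] at hinv
  have hLeq : (∫ x : ℝ, Complex.exp (Complex.I * (l * x)) / ((x : ℂ) - a) ^ 2)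
      = phi2 a (l / (2 * π)) := by
    rw [← hinv]
    congr 1
    funext x
    rw [show (2 * π * (l / (2 * π) * x)) = l * x by field_simp,
      show (↑(l * x) * Complex.I : ℂ) = Complex.I * (↑l * ↑x) by push_cast; ring,
      mul_one_div]
  rw [hLeq]
  rcases lt_or_gt_of_ne hl with hneg | hpos
  · rw [if_neg (not_lt.2 hneg.le)]
    have hvneg : l / (2 * π) < 0 := div_neg_of_neg_of_pos hneg (by positivity)
    rw [phi2, Set.indicator_of_notMem (by simpa using not_le.2 hvneg)]
  · rw [if_pos hpos]
    have hvpos : 0 < l / (2 * π) := div_pos hpos (by positivity)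
    rw [phi2, Set.indicator_of_mem (mem_Ici.2 hvpos.le), br2]
    have ea : (2 * ↑π * Complex.I * a) * ((l / (2 * π) : ℝ) : ℂ) = Complex.I * (l * a) := by
      push_cast
      field_simp
    rw [ea]
    have hscal : (-4 * (π:ℂ) ^ 2 * ((l / (2 * π) : ℝ) : ℂ)) = 2 * ↑π * Complex.I * (Complex.I * l) := by
      push_cast
      have hI := Complex.I_sq
      field_simp
      linear_combination (-4 * (l:ℂ)) * hI
    rw [hscal]

lemma im_ofReal_mul_I (ξ : ℝ) : ((ξ : ℂ) * Complex.I).im = ξ := by simp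

lemma inner_step (l1 l2 ξ1 : ℝ) (hl1 : 0 < l1) (hξ1 : 0 < ξ1) (z2 : ℂ) (hz2 : z2.im < 0) :
    ∫ ψ1 : ℝ, Complex.exp (Complex.I * (l1 * ((ψ1 : ℂ) - (ξ1 : ℂ) * Complex.I) + l2 * z2)) /
        (((ψ1 : ℂ) - (ξ1 : ℂ) * Complex.I) * z2 * (((ψ1 : ℂ) - (ξ1 : ℂ) * Complex.I) + z2))
      = 2 * π * Complex.I * Complex.exp (Complex.I * (l2 * z2)) *
          (1 - Complex.exp (-(Complex.I * (l1 * z2)))) / z2 ^ 2 := by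
  set a : ℂ := (ξ1 : ℂ) * Complex.I with ha'
  set b : ℂ := a - z2 with hb'
  have ha : 0 < a.im := by rw [ha', im_ofReal_mul_I]; exact hξ1
  have hz2ne : z2 ≠ 0 := fun h => by simp [h] at hz2
  have hb : 0 < b.im := by
    rw [hb']
    simp only [Complex.sub_im]
    have := im_ofReal_mul_I ξ1
    rw [ha', this]
    linarith
  have hab : a ≠ b := fun h => hz2ne (by rw [hb'] at h; linear_combination h)
  have e : (fun ψ1 : ℝ => Complex.exp (Complex.I * (l1 * ((ψ1 : ℂ) - (ξ1 : ℂ) * Complex.I)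
          + l2 * z2)) /
        (((ψ1 : ℂ) - (ξ1 : ℂ) * Complex.I) * z2 * (((ψ1 : ℂ) - (ξ1 : ℂ) * Complex.I) + z2)))
      = fun ψ1 : ℝ => (Complex.exp (Complex.I * (l2 * z2) + -(Complex.I * (l1 * a))) / z2) *
          (Complex.exp (Complex.I * (l1 * ψ1)) / (((ψ1 : ℂ) - a) * ((ψ1 : ℂ) - b))) := by
    funext ψ1
    rw [show Complex.I * (l1 * ((ψ1 : ℂ) - (ξ1 : ℂ) * Complex.I) + l2 * z2)
        = Complex.I * (l1 * ψ1) + (Complex.I * (l2 * z2) + -(Complex.I * (l1 * a))) by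
      rw [ha']; ring]
    rw [Complex.exp_add]
    rw [show ((ψ1 : ℂ) - (ξ1 : ℂ) * Complex.I) + z2 = (ψ1 : ℂ) - b by rw [hb', ha']; ring,
      show ((ψ1 : ℂ) - (ξ1 : ℂ) * Complex.I) = (ψ1 : ℂ) - a by rw [ha']]
    have hpa : (ψ1 : ℂ) - a ≠ 0 := sub_ofReal_ne ψ1 a ha.ne'
    have hpb : (ψ1 : ℂ) - b ≠ 0 := sub_ofReal_ne ψ1 b hb.ne'
    field_simp
  rw [e, integral_const_mul, key1 a b ha hb hab l1 hl1.ne', if_pos hl1]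
  rw [show Complex.I * (l1 * b) = Complex.I * (l1 * a) + -(Complex.I * (l1 * z2)) by
    rw [hb']; ring]
  rw [Complex.exp_add, Complex.exp_add, Complex.exp_neg, Complex.exp_neg,
    show a - b = z2 by rw [hb']; ring]
  field_simp [Complex.exp_ne_zero]
lemma integrable_piece (m ξ : ℝ) (hξ : ξ ≠ 0) :
    Integrable (fun x : ℝ => Complex.exp (Complex.I * (m * ((x : ℂ) - (ξ : ℂ) * Complex.I))) /
      ((x : ℂ) - (ξ : ℂ) * Complex.I) ^ 2) := by
  have h : (fun x : ℝ => Complex.exp (Complex.I * (m * ((x : ℂ) - (ξ : ℂ) * Complex.I))) /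
        ((x : ℂ) - (ξ : ℂ) * Complex.I) ^ 2)
      = fun x : ℝ => Complex.exp (-(Complex.I * (m * ((ξ : ℂ) * Complex.I)))) *
          (Complex.exp (Complex.I * (m * x)) / ((x : ℂ) - (ξ : ℂ) * Complex.I) ^ 2) := by
    funext x
    rw [show Complex.I * (m * ((x : ℂ) - (ξ : ℂ) * Complex.I))
        = -(Complex.I * (m * ((ξ : ℂ) * Complex.I))) + Complex.I * (m * x) by ring,
      Complex.exp_add]
    ring
  rw [h]
  exact (integrable_one_div_sq ((ξ : ℂ) * Complex.I) (by simp [hξ]) m).const_mul _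

lemma outer_piece (m ξ2 : ℝ) (hξ2 : 0 < ξ2) (hm : m ≠ 0) :
    ∫ x : ℝ, Complex.exp (Complex.I * (m * ((x : ℂ) - (ξ2 : ℂ) * Complex.I))) /
        ((x : ℂ) - (ξ2 : ℂ) * Complex.I) ^ 2
      = if 0 < m then 2 * π * Complex.I * (Complex.I * m) else 0 := by
  set a : ℂ := (ξ2 : ℂ) * Complex.I with ha'
  have ha : 0 < a.im := by rw [ha', im_ofReal_mul_I]; exact hξ2
  have e : (fun x : ℝ => Complex.exp (Complex.I * (m * ((x : ℂ) - a))) / ((x : ℂ) - a) ^ 2)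
      = fun x : ℝ => Complex.exp (-(Complex.I * (m * a))) *
          (Complex.exp (Complex.I * (m * x)) / ((x : ℂ) - a) ^ 2) := by
    funext x
    rw [show Complex.I * (m * ((x : ℂ) - a))
        = -(Complex.I * (m * a)) + Complex.I * (m * x) by ring, Complex.exp_add]
    ring
  rw [e, integral_const_mul, key2 a ha m hm]
  rcases lt_or_gt_of_ne hm with hneg | hpos
  · rw [if_neg (not_lt.2 hneg.le), if_neg (not_lt.2 hneg.le), mul_zero]
  · rw [if_pos hpos, if_pos hpos, Complex.exp_neg]
    field_simp [Complex.exp_ne_zero]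

theorem double_contour_integral_example (l1 l2 ξ1 ξ2 : ℝ)
    (hl1 : 0 < l1) (hl2 : 0 < l2) (hξ1 : 0 < ξ1) (hξ2 : 0 < ξ2) :
    (l2 < l1 →
      (1 / (2 * Real.pi * Complex.I)) ^ 2 *
        ∫ ψ2 : ℝ, ∫ ψ1 : ℝ,
          Complex.exp (Complex.I * (l1 * ((ψ1 : ℂ) - (ξ1 : ℂ) * Complex.I) +
              l2 * ((ψ2 : ℂ) - (ξ2 : ℂ) * Complex.I))) /
            (((ψ1 : ℂ) - (ξ1 : ℂ) * Complex.I) * ((ψ2 : ℂ) - (ξ2 : ℂ) * Complex.I) *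
              (((ψ1 : ℂ) - (ξ1 : ℂ) * Complex.I) + ((ψ2 : ℂ) - (ξ2 : ℂ) * Complex.I)))
        = Complex.I * l2) ∧
    (l1 < l2 →
      (1 / (2 * Real.pi * Complex.I)) ^ 2 *
        ∫ ψ2 : ℝ, ∫ ψ1 : ℝ,
          Complex.exp (Complex.I * (l1 * ((ψ1 : ℂ) - (ξ1 : ℂ) * Complex.I) +
              l2 * ((ψ2 : ℂ) - (ξ2 : ℂ) * Complex.I))) /
            (((ψ1 : ℂ) - (ξ1 : ℂ) * Complex.I) * ((ψ2 : ℂ) - (ξ2 : ℂ) * Complex.I) *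
              (((ψ1 : ℂ) - (ξ1 : ℂ) * Complex.I) + ((ψ2 : ℂ) - (ξ2 : ℂ) * Complex.I)))
        = Complex.I * l1) := by
  have hπ : (π : ℂ) ≠ 0 := Complex.ofReal_ne_zero.2 Real.pi_ne_zero
  have houter : (∫ ψ2 : ℝ, ∫ ψ1 : ℝ,
        Complex.exp (Complex.I * (l1 * ((ψ1 : ℂ) - (ξ1 : ℂ) * Complex.I) +
            l2 * ((ψ2 : ℂ) - (ξ2 : ℂ) * Complex.I))) /
          (((ψ1 : ℂ) - (ξ1 : ℂ) * Complex.I) * ((ψ2 : ℂ) - (ξ2 : ℂ) * Complex.I) *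
            (((ψ1 : ℂ) - (ξ1 : ℂ) * Complex.I) + ((ψ2 : ℂ) - (ξ2 : ℂ) * Complex.I))))
      = ∫ ψ2 : ℝ, (2 * ↑π * Complex.I) *
          (Complex.exp (Complex.I * (l2 * ((ψ2 : ℂ) - (ξ2 : ℂ) * Complex.I))) /
              ((ψ2 : ℂ) - (ξ2 : ℂ) * Complex.I) ^ 2
            - Complex.exp (Complex.I * ((l2 - l1 : ℝ) * ((ψ2 : ℂ) - (ξ2 : ℂ) * Complex.I))) /
              ((ψ2 : ℂ) - (ξ2 : ℂ) * Complex.I) ^ 2) := by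
    congr 1
    funext ψ2
    rw [inner_step l1 l2 ξ1 hl1 hξ1 ((ψ2 : ℂ) - (ξ2 : ℂ) * Complex.I) (by simp [hξ2])]
    have hE : Complex.exp (Complex.I * ((l2 - l1 : ℝ) * ((ψ2 : ℂ) - (ξ2 : ℂ) * Complex.I)))
        = Complex.exp (Complex.I * (l2 * ((ψ2 : ℂ) - (ξ2 : ℂ) * Complex.I))) *
          Complex.exp (-(Complex.I * (l1 * ((ψ2 : ℂ) - (ξ2 : ℂ) * Complex.I)))) := by
      rw [← Complex.exp_add]
      congr 1
      push_cast
      ring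
    rw [hE]
    ring
  have hsplit : (∫ ψ2 : ℝ, (2 * ↑π * Complex.I) *
        (Complex.exp (Complex.I * (l2 * ((ψ2 : ℂ) - (ξ2 : ℂ) * Complex.I))) /
            ((ψ2 : ℂ) - (ξ2 : ℂ) * Complex.I) ^ 2
          - Complex.exp (Complex.I * ((l2 - l1 : ℝ) * ((ψ2 : ℂ) - (ξ2 : ℂ) * Complex.I))) /
            ((ψ2 : ℂ) - (ξ2 : ℂ) * Complex.I) ^ 2))
      = (2 * ↑π * Complex.I) *
        ((∫ ψ2 : ℝ, Complex.exp (Complex.I * (l2 * ((ψ2 : ℂ) - (ξ2 : ℂ) * Complex.I))) /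
            ((ψ2 : ℂ) - (ξ2 : ℂ) * Complex.I) ^ 2)
          - ∫ ψ2 : ℝ, Complex.exp (Complex.I * ((l2 - l1 : ℝ) *
              ((ψ2 : ℂ) - (ξ2 : ℂ) * Complex.I))) /
            ((ψ2 : ℂ) - (ξ2 : ℂ) * Complex.I) ^ 2) := by
    rw [integral_const_mul, integral_sub (integrable_piece l2 ξ2 hξ2.ne')
      (integrable_piece (l2 - l1) ξ2 hξ2.ne')]
  constructor
  · intro hlt
    rw [houter, hsplit, outer_piece l2 ξ2 hξ2 hl2.ne', if_pos hl2,
      outer_piece (l2 - l1) ξ2 hξ2 (by linarith), if_neg (by push_neg; linarith)]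
    field_simp [Complex.I_ne_zero]
    ring
  · intro hlt
    rw [houter, hsplit, outer_piece l2 ξ2 hξ2 hl2.ne', if_pos hl2,
      outer_piece (l2 - l1) ξ2 hξ2 (by linarith), if_pos (by linarith)]
    push_cast
    field_simp [Complex.I_ne_zero]
    ring
end
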